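/- Let w_0, …, w_n be unit vectors in C^n forming the vertex set of a real regular simplex. Write w_j = x_j + i y_j and let u_j = (x_j, y_j), v_j = (−y_j, x_j) ∈ R^{2n} be the associated real vectors. Then for any two index choices 0 ≤ j_1 < … < j_n ≤ n and 0 ≤ k_1 < … < k_n ≤ n, one has |det(u_{j_1}, …, u_{j_n}, v_{k_1}, …, v_{k_n})| = (n+1)^(n-1) / n^n. -/

import Mathlib

/-- The first associated real vector `u = (x₁, …, xₙ, y₁, …, yₙ) ∈ ℝ²ⁿ`
of `w = x + iy ∈ ℂⁿ`. -/
def assocU {n : ℕ} (w : Fin n → ℂ) : Fin n ⊕ Fin n → ℝ :=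
  Sum.elim (fun i => (w i).re) (fun i => (w i).im)

/-- The second associated real vector `v = (-y₁, …, -yₙ, x₁, …, xₙ) ∈ ℝ²ⁿ`
of `w = x + iy ∈ ℂⁿ`. -/
def assocV {n : ℕ} (w : Fin n → ℂ) : Fin n ⊕ Fin n → ℝ :=
  Sum.elim (fun i => -(w i).im) (fun i => (w i).re)

/-- If `w₀, …, wₙ` are unit vectors in `ℂⁿ` forming the vertex set of a real regular
simplex, then for any two strictly increasing index choices the `2n × 2n` real
determinant with columns `u_{j₁}, …, u_{jₙ}, v_{k₁}, …, v_{kₙ}` has absolute value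
`(n+1)^(n-1) / nⁿ`. -/
theorem stmt11 (n : ℕ) (w : Fin (n + 1) → EuclideanSpace ℂ (Fin n))
    (hw : ∀ j, ‖w j‖ = 1)
    (hreal : ∀ j i, (w j i).im = 0)
    (hinj : Function.Injective w)
    (d : ℝ) (hd : ∀ j k, j ≠ k → ‖w j - w k‖ = d)
    (s t : Fin n → Fin (n + 1)) (hs : StrictMono s) (ht : StrictMono t) :
    |Matrix.det (Matrix.of fun (i c : Fin n ⊕ Fin n) =>
        Sum.elim (fun a => assocU (fun i' => w (s a) i') i)
          (fun b => assocV (fun i' => w (t b) i') i) c)| =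
      ((n : ℝ) + 1) ^ (n - 1) / (n : ℝ) ^ n := by
  rcases Nat.eq_zero_or_pos n with hn | hn
  · exfalso
    subst hn
    have h := hw 0
    have h0 : w 0 = 0 := Subsingleton.elim _ _
    rw [h0, norm_zero] at h
    exact one_ne_zero h.symm
  set x : Fin (n + 1) → Fin n → ℝ := fun j i => (w j i).re with hxdef
  have hnormsq : ∀ z : ℂ, z.im = 0 → ‖z‖ ^ 2 = z.re ^ 2 := by
    intro z hz
    rw [Complex.sq_norm, Complex.normSq_apply, hz]
    ring
  -- diagonal dot products are 1
  have hdiag : ∀ j, ∑ i, x j i * x j i = 1 := by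
    intro j
    have h1 : ‖w j‖ ^ 2 = ∑ i, ‖w j i‖ ^ 2 := by
      rw [EuclideanSpace.norm_eq, Real.sq_sqrt]
      positivity
    rw [hw j, one_pow] at h1
    have h2 : ∀ i, ‖w j i‖ ^ 2 = x j i * x j i := by
      intro i
      rw [hnormsq _ (hreal j i)]
      ring
    rw [Finset.sum_congr rfl (fun i _ => h2 i)] at h1
    exact h1.symm
  have hexpand : ∀ j k : Fin (n + 1), ∑ i, (x j i - x k i) ^ 2 =
      (∑ i, x j i * x j i) + (∑ i, x k i * x k i) - 2 * ∑ i, x j i * x k i := by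
    intro j k
    rw [Finset.sum_congr rfl (fun i _ => show (x j i - x k i) ^ 2
        = x j i * x j i + x k i * x k i - 2 * (x j i * x k i) from by ring),
      Finset.sum_sub_distrib, Finset.sum_add_distrib, ← Finset.mul_sum]
  set c : ℝ := 1 - d ^ 2 / 2 with hcdef
  -- off-diagonal dot products are c
  have hoff : ∀ j k, j ≠ k → ∑ i, x j i * x k i = c := by
    intro j k hjk
    have h1 : ‖w j - w k‖ ^ 2 = ∑ i, ‖(w j - w k) i‖ ^ 2 := by
      rw [EuclideanSpace.norm_eq, Real.sq_sqrt]
      positivity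
    rw [hd j k hjk] at h1
    have h2 : ∀ i, ‖(w j - w k) i‖ ^ 2 = (x j i - x k i) ^ 2 := by
      intro i
      have hsub : (w j - w k) i = w j i - w k i := rfl
      rw [hsub, hnormsq _ (by rw [Complex.sub_im, hreal, hreal]; ring)]
      simp [hxdef, Complex.sub_re]
    rw [Finset.sum_congr rfl (fun i _ => h2 i)] at h1
    rw [hexpand j k, hdiag j, hdiag k] at h1
    rw [hcdef]
    linarith
  have hdot : ∀ j k, ∑ i, x j i * x k i = if j = k then 1 else c := by
    intro j k
    by_cases h : j = k
    · simp [h, hdiag]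
    · simp [h, hoff j k h]
  -- c ≠ 1
  have hc1 : c ≠ 1 := by
    intro hc
    have hjk : (⟨0, by omega⟩ : Fin (n + 1)) ≠ ⟨1, by omega⟩ := by
      simp [Fin.ext_iff]
    have h1 := hoff _ _ hjk
    have h2 := hdiag (⟨0, by omega⟩ : Fin (n + 1))
    have h3 : ∑ i, (x ⟨0, by omega⟩ i - x ⟨1, by omega⟩ i) ^ 2 = 0 := by
      have := hdiag (⟨1, by omega⟩ : Fin (n + 1))
      rw [hexpand, h1, h2, this, hc]; ring
    have h4 : ∀ i, x ⟨0, by omega⟩ i = x ⟨1, by omega⟩ i := by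
      intro i
      have := Finset.sum_eq_zero_iff_of_nonneg
        (fun i _ => sq_nonneg (x ⟨0, by omega⟩ i - x ⟨1, by omega⟩ i)) |>.mp h3 i (Finset.mem_univ i)
      nlinarith [this]
    have h5 : w ⟨0, by omega⟩ = w ⟨1, by omega⟩ := by
      refine PiLp.ext (fun i => ?_)
      apply Complex.ext
      · exact h4 i
      · rw [hreal, hreal]
    exact hjk (hinj h5)
  -- linear dependence gives c = -1/n
  have hcval : c = -1 / n := by
    have hdep : ¬ LinearIndependent ℝ x := by
      intro h
      have h1 := h.fintype_card_le_finrank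
      rw [Module.finrank_fintype_fun_eq_card, Fintype.card_fin, Fintype.card_fin] at h1
      omega
    obtain ⟨g, hg0, j0, hj0⟩ := Fintype.not_linearIndependent_iff.mp hdep
    have hgi : ∀ i, ∑ j, g j * x j i = 0 := by
      intro i
      have := congrFun hg0 i
      simpa [Finset.sum_apply] using this
    have hk : ∀ k, (1 - c) * g k + c * (∑ j, g j) = 0 := by
      intro k
      have h0 : ∑ j, g j * (∑ i, x j i * x k i) = 0 := by
        calc ∑ j, g j * (∑ i, x j i * x k i)
            = ∑ j, ∑ i, g j * x j i * x k i := by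
              refine Finset.sum_congr rfl fun j _ => ?_
              rw [Finset.mul_sum]
              exact Finset.sum_congr rfl fun i _ => by ring
          _ = ∑ i, ∑ j, g j * x j i * x k i := Finset.sum_comm
          _ = ∑ i, (∑ j, g j * x j i) * x k i := by
              refine Finset.sum_congr rfl fun i _ => ?_
              rw [Finset.sum_mul]
          _ = 0 := by simp [hgi]
      rw [Finset.sum_congr rfl (fun j _ => by rw [hdot j k])] at h0
      have h1 : ∑ j, g j * (if j = k then (1:ℝ) else c)
          = c * (∑ j, g j) + (1 - c) * g k := by
        rw [Finset.sum_congr rfl (fun j _ => show g j * (if j = k then (1:ℝ) else c)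
            = c * g j + (if j = k then (1 - c) * g j else 0) from by split <;> ring),
          Finset.sum_add_distrib, ← Finset.mul_sum,
          Finset.sum_ite_eq' Finset.univ k (fun j => (1 - c) * g j)]
        simp
      rw [h1] at h0
      linarith
    have h1c : (1 : ℝ) - c ≠ 0 := sub_ne_zero.mpr (Ne.symm hc1)
    have hgeq : ∀ k, g k = g j0 := by
      intro k
      have h1 := hk k
      have h2 := hk j0
      have : (1 - c) * (g k - g j0) = 0 := by linarith
      rcases mul_eq_zero.mp this with h | h
      · exact absurd h h1c
      · linarith
    have hS : ∑ j, g j = (n + 1 : ℝ) * g j0 := by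
      rw [Finset.sum_congr rfl (fun j _ => hgeq j), Finset.sum_const, Finset.card_univ,
        Fintype.card_fin, nsmul_eq_mul]
      push_cast
      ring
    have h2 := hk j0
    rw [hS] at h2
    have h3 : g j0 * (1 + n * c) = 0 := by nlinarith
    rcases mul_eq_zero.mp h3 with h | h
    · exact absurd h hj0
    · have hnne : (n : ℝ) ≠ 0 := Nat.cast_ne_zero.mpr (by omega)
      field_simp
      linarith
  have hnne : (n : ℝ) ≠ 0 := Nat.cast_ne_zero.mpr (by omega)
  have h1c : (1 : ℝ) - c ≠ 0 := sub_ne_zero.mpr (Ne.symm hc1)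
  -- determinant of the (1, c) matrix
  have detD : (Matrix.of fun a b : Fin n => if a = b then (1:ℝ) else c).det
      = ((n : ℝ) + 1) ^ (n - 1) / (n : ℝ) ^ n := by
    have hsplit : (Matrix.of fun a b : Fin n => if a = b then (1:ℝ) else c)
        = (1 - c) • (1 + Matrix.replicateCol (Fin 1) (fun _ : Fin n => c / (1 - c)) *
            Matrix.replicateRow (Fin 1) (fun _ : Fin n => (1:ℝ))) := by
      ext a b
      by_cases h : a = b <;>
        simp [h, Matrix.mul_apply, Matrix.one_apply, Matrix.replicateCol_apply, Matrix.replicateRow_apply,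
          Matrix.smul_apply, Matrix.add_apply, smul_eq_mul] <;>
        field_simp <;> ring
    rw [hsplit, Matrix.det_smul]; erw [Matrix.det_one_add_replicateCol_mul_replicateRow (ι := Fin 1)]
    simp only [dotProduct, Finset.sum_const, Finset.card_univ, Fintype.card_fin,
      nsmul_eq_mul, smul_eq_mul, one_mul, mul_one]
    have hnn : (n : ℝ) ^ n = (n : ℝ) ^ (n - 1) * n := by
      have h := pow_succ (n : ℝ) (n - 1)
      rwa [show n - 1 + 1 = n from by omega] at h
    have h1cv : (1 : ℝ) - c = ((n : ℝ) + 1) / n := by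
      rw [hcval]; field_simp; ring
    have hpow : ((1:ℝ) - c) ^ n = ((1:ℝ) - c) ^ (n - 1) * (1 - c) := by
      have h := pow_succ ((1:ℝ) - c) (n - 1)
      rwa [show n - 1 + 1 = n from by omega] at h
    rw [hpow, h1cv, div_pow, hcval]
    have hnp : ((n : ℝ) + 1) ≠ 0 := by positivity
    rw [hnn]
    field_simp
    ring
  -- Gram determinant of any injective selection of n columns
  have key : ∀ r : Fin n → Fin (n + 1), Function.Injective r →
      (Matrix.of fun i a : Fin n => x (r a) i).det ^ 2
        = ((n : ℝ) + 1) ^ (n - 1) / (n : ℝ) ^ n := by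
    intro r hr
    set A : Matrix (Fin n) (Fin n) ℝ := Matrix.of fun i a : Fin n => x (r a) i with hA
    have h1 : A.det ^ 2 = (A.transpose * A).det := by
      rw [Matrix.det_mul, Matrix.det_transpose]; ring
    have h2 : A.transpose * A = Matrix.of fun a b : Fin n => if a = b then (1:ℝ) else c := by
      ext a b
      simp only [Matrix.mul_apply, Matrix.transpose_apply, hA, Matrix.of_apply]
      rw [hdot (r a) (r b)]
      simp [hr.eq_iff]
    rw [h1, h2, detD]
  -- block structure
  set A1 : Matrix (Fin n) (Fin n) ℝ := Matrix.of fun i a : Fin n => x (s a) i with hA1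
  set A2 : Matrix (Fin n) (Fin n) ℝ := Matrix.of fun i a : Fin n => x (t a) i with hA2
  have hblock : (Matrix.of fun (i c : Fin n ⊕ Fin n) =>
        Sum.elim (fun a => assocU (fun i' => w (s a) i') i)
          (fun b => assocV (fun i' => w (t b) i') i) c)
      = Matrix.fromBlocks A1 0 0 A2 := by
    ext i j
    rcases i with i | i <;> rcases j with a | b <;>
      simp [assocU, assocV, Matrix.fromBlocks, hA1, hA2, hxdef, hreal]
  rw [hblock, Matrix.det_fromBlocks_zero₂₁, abs_mul]
  have k1 := key s hs.injective
  have k2 := key t ht.injective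
  have hK : (0:ℝ) ≤ ((n : ℝ) + 1) ^ (n - 1) / (n : ℝ) ^ n := by positivity
  calc |A1.det| * |A2.det|
      = Real.sqrt (A1.det ^ 2) * Real.sqrt (A2.det ^ 2) := by
        rw [Real.sqrt_sq_eq_abs, Real.sqrt_sq_eq_abs]
    _ = ((n : ℝ) + 1) ^ (n - 1) / (n : ℝ) ^ n := by
        rw [k1, k2, Real.mul_self_sqrt hK]
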